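/- arXiv:2001.11952 — 7 statements merged into one kernel-verified Lean document; each statement's English description precedes it below -/
import Mathlib

section
/- Assume a ≤ 0, k > 0, a + bk > 0 (hence b > 0), and let λ₁ > 0. Then the function τ ↦ d*(τ) is strictly decreasing on (0, ∞): for all 0 < τ₁ < τ₂ one has d*(τ₁) > d*(τ₂). -/
/-- If a ≤ 0, k > 0, a + bk > 0 and λ₁ > 0, then
τ ↦ d*(τ) = (1/(2λ₁τ))(aτ − 1 + √((aτ+1)² + 4bkτ)) is strictly decreasing on (0, ∞). -/
theorem stmt3 (a b k lam1 : ℝ) (ha : a ≤ 0) (hk : 0 < k) (habk : 0 < a + b * k)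
    (hlam : 0 < lam1)
    (dstar : ℝ → ℝ)
    (hd : ∀ τ > (0:ℝ), dstar τ =
      (1 / (2 * lam1 * τ)) * (a * τ - 1 + Real.sqrt ((a * τ + 1) ^ 2 + 4 * b * k * τ))) :
    ∀ τ₁ τ₂ : ℝ, 0 < τ₁ → τ₁ < τ₂ → dstar τ₁ > dstar τ₂ := by
  intro τ₁ τ₂ h1 h12
  have h2 : 0 < τ₂ := h1.trans h12
  set Q : ℝ → ℝ := fun τ => (a * τ + 1) ^ 2 + 4 * b * k * τ with hQ
  have hQpos : ∀ τ : ℝ, 0 < τ → 0 < Q τ := by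
    intro τ hτ
    have : Q τ = (a * τ - 1) ^ 2 + 4 * τ * (a + b * k) := by simp [hQ]; ring
    nlinarith [sq_nonneg (a * τ - 1), mul_pos hτ habk]
  -- rewrite dstar in rationalized form
  have key : ∀ τ : ℝ, 0 < τ →
      dstar τ = 2 * (a + b * k) / (lam1 * (Real.sqrt (Q τ) - a * τ + 1)) := by
    intro τ hτ
    have hs2 : Real.sqrt (Q τ) ^ 2 = Q τ := Real.sq_sqrt (hQpos τ hτ).le
    have hsnn : 0 ≤ Real.sqrt (Q τ) := Real.sqrt_nonneg _
    have hden : 0 < Real.sqrt (Q τ) - a * τ + 1 := by nlinarith [mul_nonpos_of_nonpos_of_nonneg ha hτ.le]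
    rw [hd τ hτ, show ((a * τ + 1) ^ 2 + 4 * b * k * τ) = Q τ from rfl]
    rw [one_div, inv_mul_eq_div, div_eq_div_iff (by positivity) (by positivity)]
    have hs2' : Real.sqrt (Q τ) ^ 2 = (a * τ + 1) ^ 2 + 4 * b * k * τ := hs2
    linear_combination lam1 * hs2'
  rw [key τ₁ h1, key τ₂ h2]
  have hsnn1 : 0 ≤ Real.sqrt (Q τ₁) := Real.sqrt_nonneg _
  have hQlt : Q τ₁ < Q τ₂ := by
    simp only [hQ]
    have hbk : 0 < b * k := by nlinarith
    nlinarith [mul_pos hbk (sub_pos.mpr h12), mul_pos habk (sub_pos.mpr h12),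
      mul_nonneg (sq_nonneg a) (by nlinarith : (0:ℝ) ≤ τ₂ ^ 2 - τ₁ ^ 2)]
  have hslt : Real.sqrt (Q τ₁) < Real.sqrt (Q τ₂) :=
    Real.sqrt_lt_sqrt (hQpos τ₁ h1).le hQlt
  have hglt : Real.sqrt (Q τ₁) - a * τ₁ + 1 < Real.sqrt (Q τ₂) - a * τ₂ + 1 := by
    have : a * τ₂ ≤ a * τ₁ := mul_le_mul_of_nonpos_left h12.le ha
    linarith
  have hg1 : 0 < Real.sqrt (Q τ₁) - a * τ₁ + 1 := by
    nlinarith [mul_nonpos_of_nonpos_of_nonneg ha h1.le]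
  exact div_lt_div_of_pos_left (by positivity) (by positivity)
    (by nlinarith)
end

section
/- Assume k > 0, a + bk > 0, a > 0, and let λ₁ > 0. If b > 0 then τ ↦ d*(τ) is strictly decreasing on (0, ∞), and if b < 0 then τ ↦ d*(τ) is strictly increasing on (0, ∞). -/
section Aux

variable {a b k : ℝ}

/-- Positivity of the discriminant in the s = 1/τ variable. -/
lemma stmt4_Dpos (ha : 0 < a) (habk : 0 < a + b * k) {s : ℝ} (hs : 0 < s) :
    0 < (a + s) ^ 2 + 4 * b * k * s := by
  nlinarith [sq_nonneg (a - s), mul_pos hs habk]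

/-- Strict monotonicity (in s) of g(s) = a - s + √((a+s)²+4bks) when b > 0. -/
lemma stmt4_mono_pos (ha : 0 < a) (hk : 0 < k) (habk : 0 < a + b * k) (hb : 0 < b)
    {s₁ s₂ : ℝ} (h1 : 0 < s₁) (h12 : s₁ < s₂) :
    a - s₁ + Real.sqrt ((a + s₁) ^ 2 + 4 * b * k * s₁)
      < a - s₂ + Real.sqrt ((a + s₂) ^ 2 + 4 * b * k * s₂) := by
  have h2 : 0 < s₂ := h1.trans h12
  set u := Real.sqrt ((a + s₁) ^ 2 + 4 * b * k * s₁) with hu'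
  set v := Real.sqrt ((a + s₂) ^ 2 + 4 * b * k * s₂) with hv'
  have hu2 : u ^ 2 = (a + s₁) ^ 2 + 4 * b * k * s₁ :=
    Real.sq_sqrt (stmt4_Dpos ha habk h1).le
  have hv2 : v ^ 2 = (a + s₂) ^ 2 + 4 * b * k * s₂ :=
    Real.sq_sqrt (stmt4_Dpos ha habk h2).le
  have hupos : 0 < u := Real.sqrt_pos.2 (stmt4_Dpos ha habk h1)
  have hvpos : 0 < v := Real.sqrt_pos.2 (stmt4_Dpos ha habk h2)
  have hc1 : 0 < a + s₁ + 2 * b * k := by positivity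
  have hc2 : 0 < a + s₂ + 2 * b * k := by positivity
  have hub : u < a + s₁ + 2 * b * k := by
    rw [hu', show (a + s₁) ^ 2 + 4 * b * k * s₁
        = (a + s₁ + 2 * b * k) ^ 2 - 4 * b * k * (a + b * k) by ring]
    have h4 : 0 < 4 * b * k * (a + b * k) := by positivity
    nlinarith [Real.sqrt_lt_sqrt (by nlinarith : (0:ℝ) ≤ (a + s₁ + 2 * b * k) ^ 2 - 4 * b * k * (a + b * k)) (by nlinarith : (a + s₁ + 2 * b * k) ^ 2 - 4 * b * k * (a + b * k) < (a + s₁ + 2 * b * k) ^ 2), Real.sqrt_sq hc1.le]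
  have hvb : v < a + s₂ + 2 * b * k := by
    rw [hv', show (a + s₂) ^ 2 + 4 * b * k * s₂
        = (a + s₂ + 2 * b * k) ^ 2 - 4 * b * k * (a + b * k) by ring]
    have h4 : 0 < 4 * b * k * (a + b * k) := by positivity
    nlinarith [Real.sqrt_lt_sqrt (by nlinarith : (0:ℝ) ≤ (a + s₂ + 2 * b * k) ^ 2 - 4 * b * k * (a + b * k)) (by nlinarith : (a + s₂ + 2 * b * k) ^ 2 - 4 * b * k * (a + b * k) < (a + s₂ + 2 * b * k) ^ 2), Real.sqrt_sq hc2.le]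
  -- (v-u)(v+u) = (s₂-s₁)(2a+s₁+s₂+4bk) > (s₂-s₁)(u+v)
  have key : (s₂ - s₁) * (u + v) < (s₂ - s₁) * (2 * a + s₁ + s₂ + 4 * b * k) :=
    mul_lt_mul_of_pos_left (by linarith) (by linarith)
  nlinarith [key, hu2, hv2, add_pos hupos hvpos]

/-- Strict antitonicity (in s) of g(s) when b < 0. -/
lemma stmt4_mono_neg (ha : 0 < a) (hk : 0 < k) (habk : 0 < a + b * k) (hb : b < 0)
    {s₁ s₂ : ℝ} (h1 : 0 < s₁) (h12 : s₁ < s₂) :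
    a - s₂ + Real.sqrt ((a + s₂) ^ 2 + 4 * b * k * s₂)
      < a - s₁ + Real.sqrt ((a + s₁) ^ 2 + 4 * b * k * s₁) := by
  have h2 : 0 < s₂ := h1.trans h12
  set u := Real.sqrt ((a + s₁) ^ 2 + 4 * b * k * s₁) with hu'
  set v := Real.sqrt ((a + s₂) ^ 2 + 4 * b * k * s₂) with hv'
  have hu2 : u ^ 2 = (a + s₁) ^ 2 + 4 * b * k * s₁ :=
    Real.sq_sqrt (stmt4_Dpos ha habk h1).le
  have hv2 : v ^ 2 = (a + s₂) ^ 2 + 4 * b * k * s₂ :=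
    Real.sq_sqrt (stmt4_Dpos ha habk h2).le
  have hupos : 0 < u := Real.sqrt_pos.2 (stmt4_Dpos ha habk h1)
  have hvpos : 0 < v := Real.sqrt_pos.2 (stmt4_Dpos ha habk h2)
  have hneg : 0 < (-(4 * b * k)) * (a + b * k) := by
    have : 0 < -(4 * b * k) := by nlinarith
    exact mul_pos this habk
  have hub : a + s₁ + 2 * b * k < u := by
    rcases le_or_gt (a + s₁ + 2 * b * k) 0 with h | h
    · exact h.trans_lt hupos
    · have : (a + s₁ + 2 * b * k) ^ 2 < (a + s₁) ^ 2 + 4 * b * k * s₁ := by nlinarith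
      exact (Real.lt_sqrt h.le).2 this
  have hvb : a + s₂ + 2 * b * k < v := by
    rcases le_or_gt (a + s₂ + 2 * b * k) 0 with h | h
    · exact h.trans_lt hvpos
    · have : (a + s₂ + 2 * b * k) ^ 2 < (a + s₂) ^ 2 + 4 * b * k * s₂ := by nlinarith
      exact (Real.lt_sqrt h.le).2 this
  have key : (s₂ - s₁) * (2 * a + s₁ + s₂ + 4 * b * k) < (s₂ - s₁) * (u + v) :=
    mul_lt_mul_of_pos_left (by linarith) (by linarith)
  nlinarith [key, hu2, hv2, add_pos hupos hvpos]

end Aux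

/-- If a > 0, k > 0, a + bk > 0 and λ₁ > 0, then
τ ↦ d*(τ) = (1/(2λ₁τ))(aτ − 1 + √((aτ+1)² + 4bkτ)) is strictly decreasing on (0,∞)
when b > 0, and strictly increasing on (0,∞) when b < 0. -/
theorem stmt4 (a b k lam1 : ℝ) (ha : 0 < a) (hk : 0 < k) (habk : 0 < a + b * k)
    (hlam : 0 < lam1)
    (dstar : ℝ → ℝ)
    (hd : ∀ τ > (0:ℝ), dstar τ =
      (1 / (2 * lam1 * τ)) * (a * τ - 1 + Real.sqrt ((a * τ + 1) ^ 2 + 4 * b * k * τ))) :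
    (0 < b → ∀ τ₁ τ₂ : ℝ, 0 < τ₁ → τ₁ < τ₂ → dstar τ₁ > dstar τ₂) ∧
    (b < 0 → ∀ τ₁ τ₂ : ℝ, 0 < τ₁ → τ₁ < τ₂ → dstar τ₁ < dstar τ₂) := by
  -- rewrite dstar in terms of s = 1/τ
  have hd' : ∀ τ > (0:ℝ), dstar τ =
      (1 / (2 * lam1)) * (a - 1/τ + Real.sqrt ((a + 1/τ) ^ 2 + 4 * b * k * (1/τ))) := by
    intro τ hτ
    have hτ0 : τ ≠ 0 := ne_of_gt hτ
    have hsq : Real.sqrt ((a * τ + 1) ^ 2 + 4 * b * k * τ)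
        = τ * Real.sqrt ((a + 1/τ) ^ 2 + 4 * b * k * (1/τ)) := by
      rw [show (a * τ + 1) ^ 2 + 4 * b * k * τ
          = τ ^ 2 * ((a + 1/τ) ^ 2 + 4 * b * k * (1/τ)) by field_simp,
        Real.sqrt_mul (sq_nonneg τ), Real.sqrt_sq hτ.le]
    rw [hd τ hτ, hsq]
    field_simp
  constructor
  · intro hb τ₁ τ₂ hτ₁ hττ
    have hτ₂ : 0 < τ₂ := hτ₁.trans hττ
    rw [hd' τ₁ hτ₁, hd' τ₂ hτ₂]
    have hs : 1/τ₂ < 1/τ₁ := one_div_lt_one_div_of_lt hτ₁ hττ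
    have hs2 : 0 < 1/τ₂ := by positivity
    have := stmt4_mono_pos ha hk habk hb hs2 hs
    have hfac : 0 < 1 / (2 * lam1) := by positivity
    exact mul_lt_mul_of_pos_left this hfac
  · intro hb τ₁ τ₂ hτ₁ hττ
    have hτ₂ : 0 < τ₂ := hτ₁.trans hττ
    rw [hd' τ₁ hτ₁, hd' τ₂ hτ₂]
    have hs : 1/τ₂ < 1/τ₁ := one_div_lt_one_div_of_lt hτ₁ hττ
    have hs2 : 0 < 1/τ₂ := by positivity
    have := stmt4_mono_neg ha hk habk hb hs2 hs
    have hfac : 0 < 1 / (2 * lam1) := by positivity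
    exact mul_lt_mul_of_pos_left this hfac
end

section
/- Assume k > 0, a + bk > 0, and let λ₁ > 0. Then lim_{τ→0⁺} d*(τ) = (a + bk)/λ₁ and lim_{τ→+∞} d*(τ) = (a + |a|)/(2λ₁); in particular the limit at infinity equals 0 if a < 0 and equals a/λ₁ if a > 0. -/
open Filter Topology

/-- For k > 0, a + bk > 0 and λ₁ > 0, the function
d*(τ) = (1/(2λ₁τ))(aτ − 1 + √((aτ+1)² + 4bkτ)) satisfies
lim_{τ→0⁺} d*(τ) = (a + bk)/λ₁ and lim_{τ→+∞} d*(τ) = (a + |a|)/(2λ₁);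
in particular the limit at infinity is 0 if a < 0 and a/λ₁ if a > 0. -/
theorem stmt5 (a b k lam1 : ℝ) (hk : 0 < k) (habk : 0 < a + b * k)
    (hlam : 0 < lam1)
    (dstar : ℝ → ℝ)
    (hd : ∀ τ > (0:ℝ), dstar τ =
      (1 / (2 * lam1 * τ)) * (a * τ - 1 + Real.sqrt ((a * τ + 1) ^ 2 + 4 * b * k * τ))) :
    Tendsto dstar (𝓝[>] 0) (𝓝 ((a + b * k) / lam1)) ∧
    Tendsto dstar atTop (𝓝 ((a + |a|) / (2 * lam1))) ∧
    (a < 0 → Tendsto dstar atTop (𝓝 0)) ∧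
    (0 < a → Tendsto dstar atTop (𝓝 (a / lam1))) := by
  have hEpos : ∀ τ > (0:ℝ), 0 < (a * τ + 1) ^ 2 + 4 * b * k * τ := by
    intro τ hτ
    have h : (a * τ + 1) ^ 2 + 4 * b * k * τ
        = (a * τ - 1) ^ 2 + 4 * τ * (a + b * k) := by ring
    rw [h]; positivity
  have hSpos : ∀ τ > (0:ℝ),
      0 < Real.sqrt ((a * τ + 1) ^ 2 + 4 * b * k * τ) + 1 - a * τ := by
    intro τ hτ
    have hsq : Real.sqrt ((a * τ + 1) ^ 2 + 4 * b * k * τ) ^ 2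
        = (a * τ + 1) ^ 2 + 4 * b * k * τ := Real.sq_sqrt (hEpos τ hτ).le
    have h1 : (1 - a * τ) ^ 2 < Real.sqrt ((a * τ + 1) ^ 2 + 4 * b * k * τ) ^ 2 := by
      rw [hsq]; nlinarith
    have h2 : |1 - a * τ| < Real.sqrt ((a * τ + 1) ^ 2 + 4 * b * k * τ) := by
      have := Real.sqrt_nonneg ((a * τ + 1) ^ 2 + 4 * b * k * τ)
      nlinarith [abs_nonneg (1 - a * τ), sq_abs (1 - a * τ)]
    have := neg_abs_le (1 - a * τ)
    linarith
  -- closed form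
  have key1 : ∀ τ > (0:ℝ), dstar τ =
      2 * (a + b * k) / (lam1 * (Real.sqrt ((a * τ + 1) ^ 2 + 4 * b * k * τ) + 1 - a * τ)) := by
    intro τ hτ
    have hsq : Real.sqrt ((a * τ + 1) ^ 2 + 4 * b * k * τ) ^ 2
        = (a * τ + 1) ^ 2 + 4 * b * k * τ := Real.sq_sqrt (hEpos τ hτ).le
    have hden := hSpos τ hτ
    have hkey : (a * τ - 1 + Real.sqrt ((a * τ + 1) ^ 2 + 4 * b * k * τ)) *
        (Real.sqrt ((a * τ + 1) ^ 2 + 4 * b * k * τ) + 1 - a * τ)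
        = 4 * τ * (a + b * k) := by linear_combination hsq
    rw [hd τ hτ, eq_div_iff (by positivity)]
    field_simp
    ring_nf at hkey ⊢
    linarith [hkey]
  -- limit at 0+
  have lim1 : Tendsto dstar (𝓝[>] 0) (𝓝 ((a + b * k) / lam1)) := by
    have cont : ContinuousAt
        (fun τ => 2 * (a + b * k) /
          (lam1 * (Real.sqrt ((a * τ + 1) ^ 2 + 4 * b * k * τ) + 1 - a * τ))) 0 := by
      apply ContinuousAt.div continuousAt_const
      · fun_prop
      · norm_num
        positivity
    have hval : (fun τ => 2 * (a + b * k) /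
          (lam1 * (Real.sqrt ((a * τ + 1) ^ 2 + 4 * b * k * τ) + 1 - a * τ))) 0
        = (a + b * k) / lam1 := by
      norm_num
      field_simp
    have h := cont.tendsto.mono_left (nhdsWithin_le_nhds (s := Set.Ioi (0:ℝ)))
    rw [show 2 * (a + b * k) / (lam1 * (Real.sqrt ((a * 0 + 1) ^ 2 + 4 * b * k * 0) + 1 - a * 0))
        = (a + b * k) / lam1 from by norm_num; field_simp] at h
    refine h.congr' ?_
    filter_upwards [self_mem_nhdsWithin] with τ hτ
    exact (key1 τ hτ).symm
  -- limit at infinity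
  have lim2 : Tendsto dstar atTop (𝓝 ((a + |a|) / (2 * lam1))) := by
    have cont : ContinuousAt
        (fun x : ℝ => (a - x + Real.sqrt ((a + x) ^ 2 + 4 * b * k * x)) / (2 * lam1)) 0 := by
      fun_prop
    have hinv : Tendsto (fun τ : ℝ => 1 / τ) atTop (𝓝 0) := by
      simpa using tendsto_inv_atTop_zero
    have comp := cont.tendsto.comp hinv
    rw [show (a - 0 + Real.sqrt ((a + 0) ^ 2 + 4 * b * k * 0)) / (2 * lam1)
        = (a + |a|) / (2 * lam1) from by norm_num [Real.sqrt_sq_eq_abs]] at comp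
    refine comp.congr' ?_
    filter_upwards [eventually_gt_atTop (0:ℝ)] with τ hτ
    have hsqrt : Real.sqrt ((a + 1 / τ) ^ 2 + 4 * b * k * (1 / τ))
        = Real.sqrt ((a * τ + 1) ^ 2 + 4 * b * k * τ) / τ := by
      have h1 : (a + 1 / τ) ^ 2 + 4 * b * k * (1 / τ)
          = ((a * τ + 1) ^ 2 + 4 * b * k * τ) / τ ^ 2 := by
        field_simp
      rw [h1, Real.sqrt_div (hEpos τ hτ).le, Real.sqrt_sq hτ.le]
    simp only [Function.comp]
    rw [hsqrt, hd τ hτ]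
    have h2 : a - 1 / τ + Real.sqrt ((a * τ + 1) ^ 2 + 4 * b * k * τ) / τ
        = (a * τ - 1 + Real.sqrt ((a * τ + 1) ^ 2 + 4 * b * k * τ)) / τ := by
      field_simp
    rw [h2, div_div]
    ring
  refine ⟨lim1, lim2, ?_, ?_⟩
  · intro ha
    have h0 : (a + |a|) / (2 * lam1) = 0 := by
      rw [abs_of_neg ha]; ring_nf
    rwa [h0] at lim2
  · intro ha
    have h0 : (a + |a|) / (2 * lam1) = a / lam1 := by
      rw [abs_of_pos ha]
      field_simp
      ring
    rwa [h0] at lim2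
end

section
/- Suppose F : [0,∞)² → ℝ and H : [0,∞) → ℝ are continuous with H(0) = 0, and condition (A4) holds. If (u, v) is a nonnegative classical solution of the steady-state system (S) on a bounded open set Ω ⊂ ℝⁿ with zero Dirichlet boundary values, then 0 ≤ u(x) ≤ u* and 0 ≤ v(x) ≤ H* for all x ∈ Ω, where H* = max_{0 ≤ s ≤ u*} H(s). -/
open Set

/-- The Laplacian of `f` at `x`: the trace of the second derivative, computed as the
sum of the pure second derivatives along the standard coordinate directions. -/
noncomputable def Lap {n : ℕ} (f : EuclideanSpace ℝ (Fin n) → ℝ)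
    (x : EuclideanSpace ℝ (Fin n)) : ℝ :=
  ∑ i : Fin n, iteratedFDeriv ℝ 2 f x ![EuclideanSpace.single i (1 : ℝ), EuclideanSpace.single i 1]

open Set

lemma second_deriv_nonpos_of_localMax {E : Type*} [NormedAddCommGroup E] [NormedSpace ℝ E]
    {f : E → ℝ} {Ω : Set E} (hΩ : IsOpen Ω) (hf : ContDiffOn ℝ 2 f Ω)
    {x₀ : E} (hx : x₀ ∈ Ω) (hmax : IsLocalMax f x₀) (e : E) :
    fderiv ℝ (fderiv ℝ f) x₀ e e ≤ 0 := by
  set L : ℝ → E := fun t => x₀ + t • e with hLdef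
  have hL : ∀ t : ℝ, HasDerivAt L e t := by
    intro t
    have h1 : HasDerivAt (fun t : ℝ => t • e) ((1:ℝ) • e) t :=
      (hasDerivAt_id t).smul_const e
    have h2 := h1.const_add x₀; rw [one_smul] at h2; exact h2
  have hLcont : Continuous L := by continuity
  have hL0 : L 0 = x₀ := by simp [hLdef]
  have hdf : DifferentiableOn ℝ f Ω := hf.differentiableOn (by norm_num)
  have hdf' : DifferentiableOn ℝ (fderiv ℝ f) Ω := by
    have h1 : ContDiffOn ℝ 1 (fderivWithin ℝ f Ω) Ω :=
      hf.fderivWithin hΩ.uniqueDiffOn (by norm_num)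
    have h2 : DifferentiableOn ℝ (fderivWithin ℝ f Ω) Ω := h1.differentiableOn (by norm_num)
    exact h2.congr (fun x hx' => (fderivWithin_of_isOpen hΩ hx').symm)
  set g : ℝ → ℝ := fun t => f (L t) with hgdef
  set g' : ℝ → ℝ := fun t => fderiv ℝ f (L t) e with hg'def
  have hg : ∀ t : ℝ, L t ∈ Ω → HasDerivAt g (g' t) t := by
    intro t ht
    exact (((hdf (L t) ht).differentiableAt (hΩ.mem_nhds ht)).hasFDerivAt).comp_hasDerivAt t (hL t)
  -- second derivative of g at 0
  set c : ℝ := fderiv ℝ (fderiv ℝ f) x₀ e e with hcdef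
  have hD2 : DifferentiableAt ℝ (fderiv ℝ f) x₀ :=
    (hdf' x₀ hx).differentiableAt (hΩ.mem_nhds hx)
  have hcomp : HasDerivAt (fun t => fderiv ℝ f (L t)) (fderiv ℝ (fderiv ℝ f) x₀ e) 0 := by
    have := hD2.hasFDerivAt.comp_hasDerivAt_of_eq 0 (hL 0) hL0.symm
    exact this
  have hg'0d : HasDerivAt g' c 0 := by
    have := hcomp.clm_apply (hasDerivAt_const 0 e)
    simpa [hg'def, hcdef, hL0] using this
  -- local max of g at 0
  have hmaxg : ∀ᶠ t in nhds 0, g t ≤ g 0 := by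
    have : Filter.Tendsto L (nhds 0) (nhds x₀) := by
      rw [← hL0]; exact hLcont.continuousAt
    have h2 := this.eventually hmax
    simpa [hgdef, hL0] using h2
  have hLΩ : ∀ᶠ t in nhds 0, L t ∈ Ω := by
    have : Filter.Tendsto L (nhds 0) (nhds x₀) := by
      rw [← hL0]; exact hLcont.continuousAt
    exact this.eventually (hΩ.eventually_mem hx)
  have hg'zero : g' 0 = 0 := by
    have hlm : IsLocalMax g 0 := hmaxg
    have h0Ω : L 0 ∈ Ω := by rw [hL0]; exact hx
    exact hlm.hasDerivAt_eq_zero (hg 0 h0Ω)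
  by_contra hpos
  push_neg at hpos
  have hslope : ∀ᶠ t in nhdsWithin (0:ℝ) {(0:ℝ)}ᶜ, 0 < slope g' 0 t := by
    have := (hasDerivAt_iff_tendsto_slope.1 hg'0d).eventually (eventually_gt_nhds hpos)
    exact this
  -- extract ε
  obtain ⟨s, hs_mem, hs⟩ := hslope.exists_mem
  obtain ⟨ε₁, hε₁, hball₁⟩ := Metric.mem_nhdsWithin_iff.1 hs_mem
  obtain ⟨ε₂, hε₂, hball₂⟩ := Metric.eventually_nhds_iff_ball.1 hmaxg
  obtain ⟨ε₃, hε₃, hball₃⟩ := Metric.eventually_nhds_iff_ball.1 hLΩ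
  set δ : ℝ := min ε₁ (min ε₂ ε₃) / 2 with hδdef
  have hδpos : 0 < δ := by positivity
  have hδlt : ∀ t : ℝ, |t| ≤ δ → |t| < ε₁ ∧ |t| < ε₂ ∧ |t| < ε₃ := by
    intro t ht
    have h1 : δ < min ε₁ (min ε₂ ε₃) := by
      have : 0 < min ε₁ (min ε₂ ε₃) := by positivity
      linarith [this]
    refine ⟨lt_of_le_of_lt ht (lt_of_lt_of_le h1 (min_le_left _ _)), ?_, ?_⟩
    · exact lt_of_le_of_lt ht (lt_of_lt_of_le h1 ((min_le_right _ _).trans (min_le_left _ _)))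
    · exact lt_of_le_of_lt ht (lt_of_lt_of_le h1 ((min_le_right _ _).trans (min_le_right _ _)))
  have hΩmem : ∀ t : ℝ, |t| ≤ δ → L t ∈ Ω := by
    intro t ht
    exact hball₃ t (by simpa [Real.dist_eq] using (hδlt t ht).2.2)
  have hg'pos : ∀ t : ℝ, 0 < t → t ≤ δ → 0 < g' t := by
    intro t ht0 htδ
    have habs : |t| ≤ δ := by rw [abs_of_pos ht0]; exact htδ
    have hmem : t ∈ Metric.ball (0:ℝ) ε₁ ∩ {(0:ℝ)}ᶜ := by
      constructor
      · simpa [Real.dist_eq] using (hδlt t habs).1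
      · simp [ne_of_gt ht0]
    have hsl : 0 < slope g' 0 t := hs t (hball₁ hmem)
    rw [slope_def_field, hg'zero, sub_zero, sub_zero] at hsl
    exact (div_pos_iff.1 hsl).resolve_right (fun h => absurd ht0 (not_lt.2 h.2.le)) |>.1
  -- g strictly monotone on [0, δ]
  have hmono : StrictMonoOn g (Icc 0 δ) := by
    apply strictMonoOn_of_deriv_pos (convex_Icc 0 δ)
    · intro t ht
      have habs : |t| ≤ δ := by
        rw [abs_le]; exact ⟨by linarith [ht.1], ht.2⟩
      exact (hg t (hΩmem t habs)).continuousAt.continuousWithinAt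
    · intro t ht
      rw [interior_Icc] at ht
      have habs : |t| ≤ δ := by
        rw [abs_le]; exact ⟨by linarith [ht.1], ht.2.le⟩
      rw [(hg t (hΩmem t habs)).deriv]
      exact hg'pos t ht.1 ht.2.le
  have h1 : g 0 < g δ := hmono (left_mem_Icc.2 hδpos.le) (right_mem_Icc.2 hδpos.le) hδpos
  have h2 : g δ ≤ g 0 := hball₂ δ (by
    simp only [Metric.mem_ball, Real.dist_eq, sub_zero]
    exact (hδlt δ (le_of_eq (abs_of_pos hδpos))).2.1)
  linarith

lemma Lap_nonpos_of_isLocalMax {n : ℕ} {f : EuclideanSpace ℝ (Fin n) → ℝ}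
    {Ω : Set (EuclideanSpace ℝ (Fin n))} (hΩ : IsOpen Ω) (hf : ContDiffOn ℝ 2 f Ω)
    {x₀ : EuclideanSpace ℝ (Fin n)} (hx : x₀ ∈ Ω) (hmax : IsLocalMax f x₀) :
    Lap f x₀ ≤ 0 := by
  unfold Lap
  apply Finset.sum_nonpos
  intro i _
  rw [iteratedFDeriv_two_apply]
  simp only [Matrix.cons_val_zero, Matrix.cons_val_one, Matrix.head_cons]
  exact second_deriv_nonpos_of_localMax hΩ hf hx hmax _

/-- a priori bounds for nonnegative classical solutions of the steady
state system (S) under condition (A4): 0 ≤ u ≤ u* and 0 ≤ v ≤ H* = max_{[0,u*]} H. -/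
theorem stmt6 {n : ℕ} (Ω : Set (EuclideanSpace ℝ (Fin n)))
    (hΩo : IsOpen Ω) (hΩb : Bornology.IsBounded Ω)
    (d τ : ℝ) (hd : 0 < d) (hτ : 0 < τ)
    (F : ℝ → ℝ → ℝ) (H : ℝ → ℝ)
    (hFc : ContinuousOn (Function.uncurry F) (Ici 0 ×ˢ Ici 0))
    (hHc : ContinuousOn H (Ici 0)) (hH0 : H 0 = 0)
    -- condition (A4)
    (F₁ : ℝ → ℝ) (K₀ ustar : ℝ) (hK₀ : 0 < K₀) (hustar : 0 < ustar)
    (hF₁c : ContinuousOn F₁ (Ici 0))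
    (hFle : ∀ u ≥ (0:ℝ), ∀ v ≥ (0:ℝ), F u v ≤ F₁ u * u)
    (hF₁star : F₁ ustar = 0)
    (hF₁pos : ∀ u : ℝ, 0 < u → u < ustar → 0 < F₁ u ∧ F₁ u < K₀)
    (hF₁neg : ∀ u : ℝ, ustar < u → F₁ u < 0)
    -- (u, v) nonnegative classical solution of (S)
    (u v : EuclideanSpace ℝ (Fin n) → ℝ)
    (huc : ContinuousOn u (closure Ω)) (hvc : ContinuousOn v (closure Ω))
    (hu2 : ContDiffOn ℝ 2 u Ω) (hv2 : ContDiffOn ℝ 2 v Ω)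
    (hub : ∀ x ∈ frontier Ω, u x = 0) (hvb : ∀ x ∈ frontier Ω, v x = 0)
    (hun : ∀ x ∈ Ω, 0 ≤ u x) (hvn : ∀ x ∈ Ω, 0 ≤ v x)
    (heq1 : ∀ x ∈ Ω, d * Lap u x + F (u x) (v x) = 0)
    (heq2 : ∀ x ∈ Ω, d * Lap v x + (1 / τ) * (H (u x) - v x) = 0)
    -- H* = max of H on [0, u*]
    (Hstar : ℝ) (hHstar : IsGreatest (H '' Icc 0 ustar) Hstar) :
    ∀ x ∈ Ω, 0 ≤ u x ∧ u x ≤ ustar ∧ 0 ≤ v x ∧ v x ≤ Hstar := by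
  
  -- closure Ω is compact
  have hK : IsCompact (closure Ω) := hΩb.isCompact_closure
  -- membership in Ω gives membership in closure; frontier decomposition
  have hfront : ∀ x ∈ closure Ω, x ∉ Ω → x ∈ frontier Ω := by
    intro x hx hxΩ
    exact ⟨hx, by rwa [hΩo.interior_eq]⟩
  -- Step 1 : u ≤ ustar on closure Ω
  have hubound : ∀ x ∈ closure Ω, u x ≤ ustar := by
    intro x hx
    by_contra hlt
    push_neg at hlt
    obtain ⟨x₀, hx₀, hmax⟩ := hK.exists_isMaxOn ⟨x, hx⟩ huc
    have hx₀big : ustar < u x₀ := lt_of_lt_of_le hlt (hmax hx)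
    have hx₀Ω : x₀ ∈ Ω := by
      by_contra h
      have := hub x₀ (hfront x₀ hx₀ h)
      linarith
    have hloc : IsLocalMax u x₀ :=
      Filter.eventually_of_mem (hΩo.mem_nhds hx₀Ω) (fun y hy => hmax (subset_closure hy))
    have hLap : Lap u x₀ ≤ 0 := Lap_nonpos_of_isLocalMax hΩo hu2 hx₀Ω hloc
    have heqv := heq1 x₀ hx₀Ω
    have hF : 0 ≤ F (u x₀) (v x₀) := by nlinarith
    have hle := hFle (u x₀) (hun x₀ hx₀Ω) (v x₀) (hvn x₀ hx₀Ω)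
    have hneg := hF₁neg (u x₀) hx₀big
    have hupos : 0 < u x₀ := lt_trans hustar hx₀big
    nlinarith
  -- Hstar bounds
  have hHstar0 : 0 ≤ Hstar := by
    have : H 0 ≤ Hstar := hHstar.2 ⟨0, ⟨le_rfl, hustar.le⟩, rfl⟩
    linarith [hH0 ▸ this]
  -- Step 2 : v ≤ Hstar on closure Ω
  have hvbound : ∀ x ∈ closure Ω, v x ≤ Hstar := by
    intro x hx
    by_contra hlt
    push_neg at hlt
    obtain ⟨x₀, hx₀, hmax⟩ := hK.exists_isMaxOn ⟨x, hx⟩ hvc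
    have hx₀big : Hstar < v x₀ := lt_of_lt_of_le hlt (hmax hx)
    have hx₀Ω : x₀ ∈ Ω := by
      by_contra h
      have := hvb x₀ (hfront x₀ hx₀ h)
      linarith
    have hloc : IsLocalMax v x₀ :=
      Filter.eventually_of_mem (hΩo.mem_nhds hx₀Ω) (fun y hy => hmax (subset_closure hy))
    have hLap : Lap v x₀ ≤ 0 := Lap_nonpos_of_isLocalMax hΩo hv2 hx₀Ω hloc
    have heqv := heq2 x₀ hx₀Ω
    have hτ' : 0 < 1 / τ := by positivity
    have hF : 0 ≤ H (u x₀) - v x₀ := by nlinarith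
    have hHle : H (u x₀) ≤ Hstar :=
      hHstar.2 ⟨u x₀, ⟨hun x₀ hx₀Ω, hubound x₀ (subset_closure hx₀Ω)⟩, rfl⟩
    linarith
  intro x hxΩ
  exact ⟨hun x hxΩ, hubound x (subset_closure hxΩ), hvn x hxΩ,
    hvbound x (subset_closure hxΩ)⟩
end

section
/- Suppose F : [0,∞)² → ℝ and H : [0,∞) → ℝ are continuous with H(0) = 0, condition (A5) holds with constants K₁, K₂, K₃ and function F₂, and in addition F₂(v) ≤ K₄ for all v ≥ 0, where K₄ > 0 (condition (A6a)). If (u, v) is a nonnegative classical solution of the steady-state system (S) on a bounded open set Ω ⊂ ℝⁿ with zero Dirichlet boundary values, then 0 ≤ u(x) ≤ K₄/K₁ and 0 ≤ v(x) ≤ H** for all x ∈ Ω, where H** = max_{0 ≤ s ≤ K₄/K₁} H(s). -/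
open Set
open Filter Topology

open Filter Topology in
/-- Second derivative test necessary condition: at a local max, m ≤ 0. -/
lemma second_deriv_nonpos_at_localMax (f : ℝ → ℝ) (a m : ℝ)
    (hdiff : ∀ᶠ x in 𝓝 a, DifferentiableAt ℝ f x)
    (h2 : HasDerivAt (deriv f) m a)
    (hmax : IsLocalMax f a) : m ≤ 0 := by
  by_contra h
  push_neg at h
  have h0 : deriv f a = 0 := hmax.deriv_eq_zero
  have hslope : Tendsto (slope (deriv f) a) (𝓝[≠] a) (𝓝 m) :=
    hasDerivAt_iff_tendsto_slope.mp h2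
  have hpos : ∀ᶠ t in 𝓝[>] a, 0 < deriv f t := by
    have h1 : ∀ᶠ t in 𝓝[>] a, 0 < slope (deriv f) a t :=
      (hslope.mono_left (nhdsWithin_mono _ (fun t ht => ne_of_gt ht))).eventually
        (eventually_gt_nhds h)
    filter_upwards [h1, self_mem_nhdsWithin] with t ht hta
    rw [slope_def_field, h0, sub_zero] at ht
    have htpos : 0 < t - a := sub_pos.2 hta
    have := mul_pos ht htpos
    rw [div_mul_cancel₀ _ (ne_of_gt htpos)] at this
    exact this
  have hev : ∀ᶠ t in 𝓝[>] a,
      (0 < deriv f t ∧ DifferentiableAt ℝ f t) ∧ f t ≤ f a :=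
    (hpos.and (hdiff.filter_mono nhdsWithin_le_nhds)).and
      (hmax.filter_mono nhdsWithin_le_nhds)
  obtain ⟨b, hab, hb⟩ := (nhdsGT_basis_of_exists_gt ⟨a + 1, lt_add_one a⟩).eventually_iff.mp hev
  set c : ℝ := (a + b) / 2 with hc
  have hac : a < c := by rw [hc]; linarith
  have hcb : c < b := by rw [hc]; linarith
  have hsub : Ioc a c ⊆ Ioo a b := fun t ht => ⟨ht.1, lt_of_le_of_lt ht.2 hcb⟩
  have hmono : StrictMonoOn f (Icc a c) := by
    apply strictMonoOn_of_deriv_pos (convex_Icc a c)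
    · intro t ht
      rcases eq_or_lt_of_le ht.1 with rfl | hat
      · exact hdiff.self_of_nhds.continuousAt.continuousWithinAt
      · exact ((hb (hsub ⟨hat, ht.2⟩)).1.2).continuousAt.continuousWithinAt
    · intro t ht
      rw [interior_Icc] at ht
      exact (hb (hsub ⟨ht.1, le_of_lt ht.2⟩)).1.1
  have h1 : f a < f c := hmono ⟨le_refl a, le_of_lt hac⟩ ⟨le_of_lt hac, le_refl c⟩ hac
  have h2' : f c ≤ f a := (hb (hsub ⟨hac, le_refl c⟩)).2
  linarith

open Filter Topology in
lemma lap_nonpos_at_localMax {n : ℕ} (f : EuclideanSpace ℝ (Fin n) → ℝ)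
    (x₀ : EuclideanSpace ℝ (Fin n))
    (hf : ∀ᶠ y in 𝓝 x₀, ContDiffAt ℝ 2 f y)
    (hmax : IsLocalMax f x₀) : Lap f x₀ ≤ 0 := by
  have key : ∀ i : Fin n,
      iteratedFDeriv ℝ 2 f x₀ ![EuclideanSpace.single i (1:ℝ), EuclideanSpace.single i 1] ≤ 0 := by
    intro i
    set w : EuclideanSpace ℝ (Fin n) := EuclideanSpace.single i (1:ℝ) with hw
    set c : ℝ → EuclideanSpace ℝ (Fin n) := fun t => x₀ + t • w with hcdef
    have hc0 : c 0 = x₀ := by simp [hcdef]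
    have hcd : ∀ t, HasDerivAt c w t := fun t => by
      simpa [hcdef] using ((hasDerivAt_id t).smul_const w).const_add x₀
    have hct : Tendsto c (𝓝 0) (𝓝 x₀) := by
      have := (hcd 0).continuousAt.tendsto
      rwa [hc0] at this
    set g : ℝ → ℝ := fun t => f (c t) with hgdef
    -- eventual facts near 0
    have hev : ∀ᶠ t in 𝓝 (0:ℝ), ContDiffAt ℝ 2 f (c t) := hct.eventually hf
    have hgd : ∀ᶠ t in 𝓝 (0:ℝ), HasDerivAt g (fderiv ℝ f (c t) w) t := by
      filter_upwards [hev] with t ht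
      exact ((ht.differentiableAt two_ne_zero).hasFDerivAt).comp_hasDerivAt t (hcd t)
    have hderiv_eq : ∀ᶠ t in 𝓝 (0:ℝ), deriv g t = fderiv ℝ f (c t) w := by
      filter_upwards [hgd] with t ht using ht.deriv
    -- second derivative
    have hf0 : ContDiffAt ℝ 2 f x₀ := hf.self_of_nhds
    have hfd1 : ContDiffAt ℝ 1 (fderiv ℝ f) x₀ := hf0.fderiv_right (by norm_num)
    have hfd : DifferentiableAt ℝ (fderiv ℝ f) x₀ := hfd1.differentiableAt one_ne_zero
    set m : ℝ := fderiv ℝ (fderiv ℝ f) x₀ w w with hm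
    have hφ : HasFDerivAt (fun y => fderiv ℝ f y w)
        ((ContinuousLinearMap.apply ℝ ℝ w).comp (fderiv ℝ (fderiv ℝ f) x₀)) x₀ :=
      (ContinuousLinearMap.apply ℝ ℝ w).hasFDerivAt.comp x₀ hfd.hasFDerivAt
    have hφc : HasDerivAt (fun t => fderiv ℝ f (c t) w) m 0 := by
      rw [← hc0] at hφ
      have := hφ.comp_hasDerivAt (0:ℝ) (hcd 0)
      simp [hm, hc0] at this
      exact this
    have h2 : HasDerivAt (deriv g) m 0 := by
      apply HasDerivAt.congr_of_eventuallyEq hφc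
      filter_upwards [hderiv_eq] with t ht using ht
    -- local max of g at 0
    have hgmax : IsLocalMax g 0 := by
      have h' : ∀ᶠ t in 𝓝 (0:ℝ), f (c t) ≤ f x₀ := hct.eventually hmax
      filter_upwards [h'] with t ht
      simpa [hgdef, hc0] using ht
    have hgdiff : ∀ᶠ t in 𝓝 (0:ℝ), DifferentiableAt ℝ g t := by
      filter_upwards [hgd] with t ht using ht.differentiableAt
    have := second_deriv_nonpos_at_localMax g 0 m hgdiff h2 hgmax
    rw [iteratedFDeriv_two_apply]
    simpa using this
  exact Finset.sum_nonpos fun i _ => key i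

/-- a priori bounds for nonnegative classical solutions of (S) under
conditions (A5) and (A6a): 0 ≤ u ≤ K₄/K₁ and 0 ≤ v ≤ H** = max_{[0, K₄/K₁]} H. -/
theorem stmt8 {n : ℕ} (Ω : Set (EuclideanSpace ℝ (Fin n)))
    (hΩo : IsOpen Ω) (hΩb : Bornology.IsBounded Ω)
    (d τ : ℝ) (hd : 0 < d) (hτ : 0 < τ)
    (F : ℝ → ℝ → ℝ) (H : ℝ → ℝ)
    (hFc : ContinuousOn (Function.uncurry F) (Ici 0 ×ˢ Ici 0))
    (hHc : ContinuousOn H (Ici 0)) (hH0 : H 0 = 0)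
    -- condition (A5)
    (K₁ K₂ K₃ : ℝ) (hK₁ : 0 < K₁) (hK₂ : 0 < K₂) (hK₃ : 0 < K₃)
    (F₂ : ℝ → ℝ) (hF₂c : ContinuousOn F₂ (Ici 0))
    (hFle : ∀ u ≥ (0:ℝ), ∀ v ≥ (0:ℝ), F u v ≤ -K₁ * u + F₂ v)
    (hF₂le : ∀ v ≥ (0:ℝ), F₂ v ≤ K₂ * v)
    (hHle : ∀ u ≥ (0:ℝ), H u ≤ K₃ * u)
    -- condition (A6a)
    (K₄ : ℝ) (hK₄ : 0 < K₄) (hF₂bd : ∀ v ≥ (0:ℝ), F₂ v ≤ K₄)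
    -- (u, v) nonnegative classical solution of (S)
    (u v : EuclideanSpace ℝ (Fin n) → ℝ)
    (huc : ContinuousOn u (closure Ω)) (hvc : ContinuousOn v (closure Ω))
    (hu2 : ContDiffOn ℝ 2 u Ω) (hv2 : ContDiffOn ℝ 2 v Ω)
    (hub : ∀ x ∈ frontier Ω, u x = 0) (hvb : ∀ x ∈ frontier Ω, v x = 0)
    (hun : ∀ x ∈ Ω, 0 ≤ u x) (hvn : ∀ x ∈ Ω, 0 ≤ v x)
    (heq1 : ∀ x ∈ Ω, d * Lap u x + F (u x) (v x) = 0)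
    (heq2 : ∀ x ∈ Ω, d * Lap v x + (1 / τ) * (H (u x) - v x) = 0)
    -- H** = max of H on [0, K₄/K₁]
    (Hss : ℝ) (hHss : IsGreatest (H '' Icc 0 (K₄ / K₁)) Hss) :
    ∀ x ∈ Ω, 0 ≤ u x ∧ u x ≤ K₄ / K₁ ∧ 0 ≤ v x ∧ v x ≤ Hss := by
  have hKpos : 0 < K₄ / K₁ := div_pos hK₄ hK₁
  have hcl : IsCompact (closure Ω) := hΩb.isCompact_closure
  have hHss0 : 0 ≤ Hss := by
    have : H 0 ≤ Hss := hHss.2 ⟨0, ⟨le_refl 0, le_of_lt hKpos⟩, rfl⟩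
    rwa [hH0] at this
  -- bound for u on closure Ω
  have hubd : ∀ y ∈ closure Ω, u y ≤ K₄ / K₁ := by
    intro y hy
    obtain ⟨x₀, hx₀cl, hmaxOn⟩ := hcl.exists_isMaxOn ⟨y, hy⟩ huc
    have hle : u y ≤ u x₀ := hmaxOn hy
    by_cases hx₀ : x₀ ∈ Ω
    · have hnhds : Ω ∈ 𝓝 x₀ := hΩo.mem_nhds hx₀
      have hloc : IsLocalMax u x₀ :=
        hmaxOn.isLocalMax (mem_of_superset hnhds subset_closure)
      have hlap : Lap u x₀ ≤ 0 := by
        apply lap_nonpos_at_localMax u x₀ _ hloc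
        filter_upwards [hnhds] with z hz
        exact hu2.contDiffAt (hΩo.mem_nhds hz)
      have heq := heq1 x₀ hx₀
      have hF : 0 ≤ F (u x₀) (v x₀) := by nlinarith [mul_nonpos_of_nonneg_of_nonpos hd.le hlap]
      have h5 := hFle (u x₀) (hun x₀ hx₀) (v x₀) (hvn x₀ hx₀)
      have h6 := hF₂bd (v x₀) (hvn x₀ hx₀)
      have hx₀bd : u x₀ ≤ K₄ / K₁ := by
        rw [le_div_iff₀ hK₁]; nlinarith
      linarith
    · have hfr : x₀ ∈ frontier Ω := by
        rw [hΩo.frontier_eq]; exact ⟨hx₀cl, hx₀⟩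
      have := hub x₀ hfr
      linarith [hKpos]
  -- bound for v on closure Ω
  have hvbd : ∀ y ∈ closure Ω, v y ≤ Hss := by
    intro y hy
    obtain ⟨x₁, hx₁cl, hmaxOn⟩ := hcl.exists_isMaxOn ⟨y, hy⟩ hvc
    have hle : v y ≤ v x₁ := hmaxOn hy
    by_cases hx₁ : x₁ ∈ Ω
    · have hnhds : Ω ∈ 𝓝 x₁ := hΩo.mem_nhds hx₁
      have hloc : IsLocalMax v x₁ :=
        hmaxOn.isLocalMax (mem_of_superset hnhds subset_closure)
      have hlap : Lap v x₁ ≤ 0 := by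
        apply lap_nonpos_at_localMax v x₁ _ hloc
        filter_upwards [hnhds] with z hz
        exact hv2.contDiffAt (hΩo.mem_nhds hz)
      have heq := heq2 x₁ hx₁
      have hτ' : 0 < 1 / τ := by positivity
      have hvle : v x₁ ≤ H (u x₁) := by
        nlinarith [mul_nonpos_of_nonneg_of_nonpos hd.le hlap]
      have hmem : H (u x₁) ≤ Hss :=
        hHss.2 ⟨u x₁, ⟨hun x₁ hx₁, hubd x₁ (subset_closure hx₁)⟩, rfl⟩
      linarith
    · have hfr : x₁ ∈ frontier Ω := by
        rw [hΩo.frontier_eq]; exact ⟨hx₁cl, hx₁⟩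
      have := hvb x₁ hfr
      linarith
  intro x hx
  exact ⟨hun x hx, hubd x (subset_closure hx), hvn x hx, hvbd x (subset_closure hx)⟩
end

section
/- Suppose F : [0,∞)² → ℝ and H : [0,∞) → ℝ are continuous with H(0) = 0, condition (A5) holds with constants K₁, K₂, K₃ and function F₂, and in addition H(u) ≤ K₅ for all u ≥ 0, where K₅ > 0 (condition (A6b)). If (u, v) is a nonnegative classical solution of the steady-state system (S) on a bounded open set Ω ⊂ ℝⁿ with zero Dirichlet boundary values, then 0 ≤ v(x) ≤ K₅ and 0 ≤ u(x) ≤ (1/K₁)·max_{0 ≤ s ≤ K₅} F₂(s) for all x ∈ Ω. -/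
open Set Filter Topology


lemma dirSecond_nonpos {E : Type*} [NormedAddCommGroup E] [NormedSpace ℝ E]
    {Ω : Set E} (hΩo : IsOpen Ω) {f : E → ℝ} (hf : ContDiffOn ℝ 2 f Ω)
    {x₀ : E} (hx : x₀ ∈ Ω) (hmax : ∀ y ∈ Ω, f y ≤ f x₀) (w : E) :
    fderiv ℝ (fderiv ℝ f) x₀ w w ≤ 0 := by
  by_contra hA
  push_neg at hA
  set A : ℝ := fderiv ℝ (fderiv ℝ f) x₀ w w with hAdef
  have hΩn : Ω ∈ 𝓝 x₀ := hΩo.mem_nhds hx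
  have hfa : ContDiffAt ℝ 2 f x₀ := hf.contDiffAt hΩn
  have hlocmax : IsLocalMax f x₀ := Filter.eventually_of_mem hΩn hmax
  have h1 : fderiv ℝ f x₀ = 0 := hlocmax.fderiv_eq_zero
  set L : ℝ → E := fun t => x₀ + t • w with hLdef
  have hL : ∀ t : ℝ, HasDerivAt L w t := by
    intro t
    have := ((hasDerivAt_id t).smul_const w).const_add x₀
    simpa [hLdef] using this
  set φ : ℝ → ℝ := fun t => fderiv ℝ f (L t) w with hφdef
  -- φ has derivative A at 0
  have hd2 : DifferentiableAt ℝ (fderiv ℝ f) x₀ :=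
    (hfa.fderiv_right (m := 1) le_rfl).differentiableAt one_ne_zero
  have h2 : HasDerivAt (fun t : ℝ => fderiv ℝ f (L t)) (fderiv ℝ (fderiv ℝ f) x₀ w) 0 := by
    have hL0 : L 0 = x₀ := by simp [hLdef]
    have h' : HasFDerivAt (fderiv ℝ f) (fderiv ℝ (fderiv ℝ f) x₀) (L 0) := by
      rw [hL0]; exact hd2.hasFDerivAt
    exact h'.comp_hasDerivAt 0 (hL 0)
  have hφA : HasDerivAt φ A 0 := by
    have := h2.clm_apply (hasDerivAt_const 0 w)
    simpa using this
  have hφ0 : φ 0 = 0 := by simp [hφdef, hLdef, h1]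
  -- eventually φ t > 0 for t > 0 small
  have hslope : Tendsto (slope φ 0) (𝓝[≠] 0) (𝓝 A) :=
    hasDerivAt_iff_tendsto_slope.1 hφA
  have hev1 : ∀ᶠ t in 𝓝[>] (0:ℝ), 0 < slope φ 0 t :=
    (hslope.mono_left (nhdsWithin_mono _ fun t ht => ne_of_gt ht)).eventually
      (eventually_gt_nhds hA)
  have hev2 : ∀ᶠ t in 𝓝[>] (0:ℝ), 0 < φ t := by
    filter_upwards [hev1, self_mem_nhdsWithin] with t h1' h2'
    have h3 : 0 < φ t / t := by simpa [slope, hφ0, div_eq_inv_mul] using h1'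
    exact (div_pos_iff.1 h3).resolve_right (fun h => absurd h.2 (not_lt.2 (le_of_lt h2'))) |>.1
  -- eventually L t ∈ Ω
  have hTn : (L ⁻¹' Ω) ∈ 𝓝 (0:ℝ) := by
    have hL0 : L 0 = x₀ := by simp [hLdef]
    exact ContinuousAt.preimage_mem_nhds (by fun_prop) (by rw [hL0]; exact hΩn)
  have hev3 : ∀ᶠ t in 𝓝[>] (0:ℝ), L t ∈ Ω := mem_nhdsWithin_of_mem_nhds hTn
  -- eventually f (L t) ≤ f x₀
  have hev4 : ∀ᶠ t in 𝓝[>] (0:ℝ), f (L t) ≤ f x₀ := by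
    filter_upwards [hev3] with t ht using hmax _ ht
  obtain ⟨b, hb, hIoc⟩ := mem_nhdsGT_iff_exists_Ioc_subset.1
    ((hev2.and hev3).and hev4)
  have hb0 : (0:ℝ) < b := hb
  -- g has derivative φ t wherever L t ∈ Ω
  have hg : ∀ t : ℝ, L t ∈ Ω → HasDerivAt (fun s => f (L s)) (φ t) t := by
    intro t ht
    have hdf : DifferentiableAt ℝ f (L t) :=
      (hf.contDiffAt (hΩo.mem_nhds ht)).differentiableAt two_ne_zero
    exact hdf.hasFDerivAt.comp_hasDerivAt t (hL t)
  have hgIcc : ∀ t ∈ Icc (0:ℝ) b, HasDerivAt (fun s => f (L s)) (φ t) t := by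
    intro t ht
    rcases eq_or_lt_of_le ht.1 with h | h
    · subst h
      apply hg
      simpa [hLdef] using hx
    · exact hg t (hIoc ⟨h, ht.2⟩).1.2
  have hmono : StrictMonoOn (fun s => f (L s)) (Icc 0 b) := by
    apply strictMonoOn_of_deriv_pos (convex_Icc 0 b)
    · exact fun t ht => (hgIcc t ht).continuousAt.continuousWithinAt
    · intro t ht
      rw [interior_Icc] at ht
      rw [(hgIcc t ⟨le_of_lt ht.1, le_of_lt ht.2⟩).deriv]
      exact (hIoc ⟨ht.1, le_of_lt ht.2⟩).1.1
  have hlt : f (L 0) < f (L b) :=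
    hmono ⟨le_rfl, le_of_lt hb0⟩ ⟨le_of_lt hb0, le_rfl⟩ hb0
  have hle : f (L b) ≤ f x₀ := (hIoc ⟨hb0, le_rfl⟩).2
  have hL0 : L 0 = x₀ := by simp [hLdef]
  rw [hL0] at hlt
  exact absurd (hlt.trans_le hle) (lt_irrefl _)

lemma lap_nonpos {n : ℕ} {Ω : Set (EuclideanSpace ℝ (Fin n))} (hΩo : IsOpen Ω)
    {f : EuclideanSpace ℝ (Fin n) → ℝ} (hf : ContDiffOn ℝ 2 f Ω)
    {x₀ : EuclideanSpace ℝ (Fin n)} (hx : x₀ ∈ Ω) (hmax : ∀ y ∈ Ω, f y ≤ f x₀) :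
    Lap f x₀ ≤ 0 := by
  apply Finset.sum_nonpos
  intro i _
  rw [iteratedFDeriv_two_apply]
  simp only [Matrix.cons_val_zero, Matrix.cons_val_one, Matrix.head_cons]
  exact dirSecond_nonpos hΩo hf hx hmax _

/-- a priori bounds for nonnegative classical solutions of (S) under
conditions (A5) and (A6b): 0 ≤ v ≤ K₅ and 0 ≤ u ≤ (1/K₁)·max_{[0,K₅]} F₂. -/
theorem stmt9 {n : ℕ} (Ω : Set (EuclideanSpace ℝ (Fin n)))
    (hΩo : IsOpen Ω) (hΩb : Bornology.IsBounded Ω)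
    (d τ : ℝ) (hd : 0 < d) (hτ : 0 < τ)
    (F : ℝ → ℝ → ℝ) (H : ℝ → ℝ)
    (hFc : ContinuousOn (Function.uncurry F) (Ici 0 ×ˢ Ici 0))
    (hHc : ContinuousOn H (Ici 0)) (hH0 : H 0 = 0)
    -- condition (A5)
    (K₁ K₂ K₃ : ℝ) (hK₁ : 0 < K₁) (hK₂ : 0 < K₂) (hK₃ : 0 < K₃)
    (F₂ : ℝ → ℝ) (hF₂c : ContinuousOn F₂ (Ici 0))
    (hFle : ∀ u ≥ (0:ℝ), ∀ v ≥ (0:ℝ), F u v ≤ -K₁ * u + F₂ v)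
    (hF₂le : ∀ v ≥ (0:ℝ), F₂ v ≤ K₂ * v)
    (hHle : ∀ u ≥ (0:ℝ), H u ≤ K₃ * u)
    -- condition (A6b)
    (K₅ : ℝ) (hK₅ : 0 < K₅) (hHbd : ∀ u ≥ (0:ℝ), H u ≤ K₅)
    -- (u, v) nonnegative classical solution of (S)
    (u v : EuclideanSpace ℝ (Fin n) → ℝ)
    (huc : ContinuousOn u (closure Ω)) (hvc : ContinuousOn v (closure Ω))
    (hu2 : ContDiffOn ℝ 2 u Ω) (hv2 : ContDiffOn ℝ 2 v Ω)
    (hub : ∀ x ∈ frontier Ω, u x = 0) (hvb : ∀ x ∈ frontier Ω, v x = 0)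
    (hun : ∀ x ∈ Ω, 0 ≤ u x) (hvn : ∀ x ∈ Ω, 0 ≤ v x)
    (heq1 : ∀ x ∈ Ω, d * Lap u x + F (u x) (v x) = 0)
    (heq2 : ∀ x ∈ Ω, d * Lap v x + (1 / τ) * (H (u x) - v x) = 0)
    -- max of F₂ on [0, K₅]
    (F₂max : ℝ) (hF₂max : IsGreatest (F₂ '' Icc 0 K₅) F₂max) :
    ∀ x ∈ Ω, 0 ≤ v x ∧ v x ≤ K₅ ∧ 0 ≤ u x ∧ u x ≤ (1 / K₁) * F₂max := by
  intro x hx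
  have hτ' : (0:ℝ) < 1 / τ := by positivity
  have hcl : IsCompact (closure Ω) :=
    Metric.isCompact_of_isClosed_isBounded isClosed_closure hΩb.closure
  have hne : (closure Ω).Nonempty := ⟨x, subset_closure hx⟩
  have hsplit : ∀ y ∈ closure Ω, y ∈ Ω ∨ y ∈ frontier Ω := by
    intro y hy
    rw [closure_eq_self_union_frontier] at hy
    exact hy
  -- Step 1 : v ≤ K₅ on Ω
  have hvK : ∀ y ∈ Ω, v y ≤ K₅ := by
    obtain ⟨x₀, hx₀cl, hx₀max⟩ := hcl.exists_isMaxOn hne hvc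
    have hx₀max' : ∀ y ∈ closure Ω, v y ≤ v x₀ := fun y hy => hx₀max hy
    rcases hsplit x₀ hx₀cl with hin | hfr
    · -- interior maximum
      have hmaxΩ : ∀ y ∈ Ω, v y ≤ v x₀ := fun y hy => hx₀max' y (subset_closure hy)
      have hlap : Lap v x₀ ≤ 0 := lap_nonpos hΩo hv2 hin hmaxΩ
      have heq := heq2 x₀ hin
      have h1 : 0 ≤ (1 / τ) * (H (u x₀) - v x₀) := by nlinarith
      have h2 : v x₀ ≤ H (u x₀) := by nlinarith
      have h3 : v x₀ ≤ K₅ := h2.trans (hHbd _ (hun _ hin))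
      exact fun y hy => (hmaxΩ y hy).trans h3
    · intro y hy
      have : v y ≤ v x₀ := hx₀max' y (subset_closure hy)
      rw [hvb x₀ hfr] at this
      exact this.trans (le_of_lt hK₅)
  -- Step 2 : a point x₁ ∈ Ω where u attains its max over Ω
  have hx₁ : ∃ x₁ ∈ Ω, ∀ y ∈ Ω, u y ≤ u x₁ := by
    obtain ⟨x₀, hx₀cl, hx₀max⟩ := hcl.exists_isMaxOn hne huc
    have hx₀max' : ∀ y ∈ closure Ω, u y ≤ u x₀ := fun y hy => hx₀max hy
    rcases hsplit x₀ hx₀cl with hin | hfr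
    · exact ⟨x₀, hin, fun y hy => hx₀max' y (subset_closure hy)⟩
    · refine ⟨x, hx, fun y hy => ?_⟩
      have h1 : u y ≤ u x₀ := hx₀max' y (subset_closure hy)
      rw [hub x₀ hfr] at h1
      exact h1.trans (hun _ hx)
  obtain ⟨x₁, hx₁Ω, hx₁max⟩ := hx₁
  -- Step 3 : u ≤ F₂max / K₁
  have hlap : Lap u x₁ ≤ 0 := lap_nonpos hΩo hu2 hx₁Ω hx₁max
  have heq := heq1 x₁ hx₁Ω
  have hF0 : 0 ≤ F (u x₁) (v x₁) := by nlinarith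
  have hFb : F (u x₁) (v x₁) ≤ -K₁ * u x₁ + F₂ (v x₁) :=
    hFle _ (hun _ hx₁Ω) _ (hvn _ hx₁Ω)
  have hF₂b : F₂ (v x₁) ≤ F₂max :=
    hF₂max.2 ⟨v x₁, ⟨hvn _ hx₁Ω, hvK _ hx₁Ω⟩, rfl⟩
  have hub' : u x₁ ≤ (1 / K₁) * F₂max := by
    rw [div_mul_eq_mul_div, le_div_iff₀ hK₁, one_mul, mul_comm]
    nlinarith
  exact ⟨hvn _ hx, hvK _ hx, hun _ hx, (hx₁max _ hx).trans hub'⟩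
end

section
/- Let L, d, τ > 0. Assume f : [0,∞)² → ℝ is continuously differentiable with ∂f/∂u < 0 and ∂f/∂v < 0 everywhere on [0,∞)², and H : [0,∞) → ℝ is continuous. If the one-dimensional steady-state system (52) has a positive classical solution, then d < f(0,0)·L²/π². Equivalently, (52) has no positive classical solution when d ≥ d* := f(0,0)·L²/π². -/
open Set Real

/-- nonexistence of positive solutions of the 1D steady state system (52)
for large diffusion. If f is C¹ with f_u < 0 and f_v < 0 on [0,∞)², H is continuous,
and (52) has a positive classical solution, then d < f(0,0)·L²/π². -/
theorem stmt13 (L d τ : ℝ) (hL : 0 < L) (hd : 0 < d) (hτ : 0 < τ)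
    (f : ℝ → ℝ → ℝ) (H : ℝ → ℝ)
    (hf : ContDiff ℝ 1 (Function.uncurry f))
    (hfu : ∀ p ≥ (0:ℝ), ∀ q ≥ (0:ℝ), deriv (fun s => f s q) p < 0)
    (hfv : ∀ p ≥ (0:ℝ), ∀ q ≥ (0:ℝ), deriv (f p) q < 0)
    (hH : Continuous H)
    -- (u, v) positive classical solution of (52)
    (u v : ℝ → ℝ)
    (hu2 : ContDiffOn ℝ 2 u (Icc 0 L)) (hv2 : ContDiffOn ℝ 2 v (Icc 0 L))
    (hup : ∀ x ∈ Ioo 0 L, 0 < u x) (hvp : ∀ x ∈ Ioo 0 L, 0 < v x)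
    (heq1 : ∀ x ∈ Ioo 0 L, -(d * deriv (deriv u) x) = u x * f (u x) (v x))
    (heq2 : ∀ x ∈ Ioo 0 L, -(d * deriv (deriv v) x) = (1 / τ) * (H (u x) - v x))
    (hub : u 0 = 0 ∧ u L = 0) (hvb : v 0 = 0 ∧ v L = 0) :
    d < f 0 0 * L ^ 2 / π ^ 2 := by
  obtain ⟨hu0, huL⟩ := hub
  have hLne : L ≠ 0 := hL.ne'
  have hπ : (0:ℝ) < π := Real.pi_pos
  set lam : ℝ := (π / L) ^ 2 with hlamdef
  have hlam : 0 < lam := by positivity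
  -- eigenfunction and its derivatives
  set φ : ℝ → ℝ := fun x => Real.sin (π * x / L) with hφdef
  set ψ : ℝ → ℝ := fun x => (π / L) * Real.cos (π * x / L) with hψdef
  have hlin : ∀ x : ℝ, HasDerivAt (fun y : ℝ => π * y / L) (π / L) x := by
    intro x
    simpa using ((hasDerivAt_id x).const_mul π).div_const L
  have hφd : ∀ x : ℝ, HasDerivAt φ (ψ x) x := by
    intro x
    have := (Real.hasDerivAt_sin (π * x / L)).comp x (hlin x)
    simpa [hφdef, hψdef, mul_comm, Function.comp_def] using this
  have hψd : ∀ x : ℝ, HasDerivAt ψ (-lam * φ x) x := by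
    intro x
    have := ((Real.hasDerivAt_cos (π * x / L)).comp x (hlin x)).const_mul (π / L)
    refine this.congr_deriv ?_
    simp [hφdef, hlamdef]
    ring
  have hφcont : Continuous φ := by
    exact Real.continuous_sin.comp (by continuity)
  have hψcont : Continuous ψ := by
    exact continuous_const.mul (Real.continuous_cos.comp (by continuity))
  have hφpos : ∀ x ∈ Ioo 0 L, 0 < φ x := by
    intro x hx
    apply Real.sin_pos_of_pos_of_lt_pi
    · have hx1 := hx.1
      positivity
    · rw [div_lt_iff₀ hL]
      nlinarith [hx.2]
  have hφ0 : φ 0 = 0 := by simp [hφdef]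
  have hφL : φ L = 0 := by
    simp [hφdef, mul_div_assoc, div_self hLne]
  -- derivatives of u
  have hUD : UniqueDiffOn ℝ (Icc 0 L) := uniqueDiffOn_Icc hL
  set U' : ℝ → ℝ := derivWithin u (Icc 0 L) with hU'def
  have hu1 : DifferentiableOn ℝ u (Icc 0 L) := hu2.differentiableOn (by norm_num)
  have hU'cont : ContinuousOn U' (Icc 0 L) := hu2.continuousOn_derivWithin hUD one_le_two
  have hU'diff : DifferentiableOn ℝ U' (Icc 0 L) :=
    (hu2.derivWithin hUD (m := 1) (by norm_num)).differentiableOn one_ne_zero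
  set g : ℝ → ℝ := fun x => -(u x * f (u x) (v x)) / d with hgdef
  have hucont : ContinuousOn u (Icc 0 L) := hu2.continuousOn
  have hvcont : ContinuousOn v (Icc 0 L) := hv2.continuousOn
  have hfuv : ContinuousOn (fun x => f (u x) (v x)) (Icc 0 L) := by
    exact hf.continuous.comp_continuousOn (hucont.prodMk hvcont)
  have hgcont : ContinuousOn g (Icc 0 L) := ((hucont.mul hfuv).neg).div_const d
  have hxu : ∀ x ∈ Ioo 0 L, HasDerivAt u (U' x) x := by
    intro x hx
    have hmem : Icc 0 L ∈ nhds x := Icc_mem_nhds hx.1 hx.2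
    exact ((hu1 x (Ioo_subset_Icc_self hx)).hasDerivWithinAt).hasDerivAt hmem
  have hU'd : ∀ x ∈ Ioo 0 L, HasDerivAt U' (g x) x := by
    intro x hx
    have hmem : Icc 0 L ∈ nhds x := Icc_mem_nhds hx.1 hx.2
    have h1 : HasDerivAt U' (derivWithin U' (Icc 0 L) x) x :=
      ((hU'diff x (Ioo_subset_Icc_self hx)).hasDerivWithinAt).hasDerivAt hmem
    have heqev : U' =ᶠ[nhds x] deriv u := by
      filter_upwards [isOpen_Ioo.mem_nhds hx] with y hy
      exact derivWithin_of_mem_nhds (Icc_mem_nhds hy.1 hy.2)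
    have h2 : derivWithin U' (Icc 0 L) x = deriv (deriv u) x := by
      rw [derivWithin_of_mem_nhds hmem, heqev.deriv_eq]
    have h3 : deriv (deriv u) x = g x := by
      have := heq1 x hx
      simp only [hgdef]
      rw [eq_div_iff hd.ne']
      linarith
    rw [h2, h3] at h1
    exact h1
  -- the Wronskian-type function
  set w : ℝ → ℝ := fun x => U' x * φ x - u x * ψ x with hwdef
  have hwcont : ContinuousOn w (Icc 0 L) :=
    (hU'cont.mul hφcont.continuousOn).sub (hucont.mul hψcont.continuousOn)
  have hwd : ∀ x ∈ Ioo 0 L,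
      HasDerivAt w (g x * φ x + lam * (u x * φ x)) x := by
    intro x hx
    have := ((hU'd x hx).mul (hφd x)).sub ((hxu x hx).mul (hψd x))
    refine this.congr_deriv ?_
    ring
  have hInt : IntervalIntegrable (fun x => g x * φ x + lam * (u x * φ x))
      MeasureTheory.volume 0 L := by
    apply ContinuousOn.intervalIntegrable
    rw [uIcc_of_le hL.le]
    exact (hgcont.mul hφcont.continuousOn).add
      (continuousOn_const.mul (hucont.mul hφcont.continuousOn))
  have hFTC : ∫ x in (0:ℝ)..L, (g x * φ x + lam * (u x * φ x)) = 0 := by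
    rw [intervalIntegral.integral_eq_sub_of_hasDerivAt_of_le hL.le hwcont hwd hInt]
    simp [hwdef, hφ0, hφL, hu0, huL]
  -- split the integral
  have hI1 : IntervalIntegrable (fun x => g x * φ x) MeasureTheory.volume 0 L := by
    apply ContinuousOn.intervalIntegrable
    rw [uIcc_of_le hL.le]
    exact hgcont.mul hφcont.continuousOn
  have hI2 : IntervalIntegrable (fun x => u x * φ x) MeasureTheory.volume 0 L := by
    apply ContinuousOn.intervalIntegrable
    rw [uIcc_of_le hL.le]
    exact hucont.mul hφcont.continuousOn
  set I : ℝ := ∫ x in (0:ℝ)..L, u x * φ x with hIdef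
  set J : ℝ := ∫ x in (0:ℝ)..L, u x * f (u x) (v x) * φ x with hJdef
  have hsplit : -J / d + lam * I = 0 := by
    have h1 : ∫ x in (0:ℝ)..L, (g x * φ x + lam * (u x * φ x))
        = (∫ x in (0:ℝ)..L, g x * φ x) + ∫ x in (0:ℝ)..L, lam * (u x * φ x) :=
      intervalIntegral.integral_add hI1 (hI2.const_mul lam)
    have h2 : ∫ x in (0:ℝ)..L, g x * φ x = -J / d := by
      have : (fun x => g x * φ x) = fun x => -(u x * f (u x) (v x) * φ x) / d := by
        funext x; simp [hgdef]; ring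
      rw [this, intervalIntegral.integral_div, intervalIntegral.integral_neg]
    have h3 : ∫ x in (0:ℝ)..L, lam * (u x * φ x) = lam * I :=
      intervalIntegral.integral_const_mul lam _
    rw [h1, h2, h3] at hFTC
    linarith
  have hJ : J = d * (lam * I) := by
    field_simp at hsplit
    linarith
  -- positivity of I
  have hIpos : 0 < I := by
    apply intervalIntegral.intervalIntegral_pos_of_pos_on hI2 _ hL
    intro x hx
    exact mul_pos (hup x hx) (hφpos x hx)
  -- strict antitonicity of f
  have hanti1 : ∀ q ≥ (0:ℝ), StrictAntiOn (fun s => f s q) (Ici 0) := by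
    intro q hq
    apply strictAntiOn_of_deriv_neg (convex_Ici 0)
    · exact (hf.continuous.comp (continuous_id.prodMk continuous_const)).continuousOn
    · intro x hx
      rw [interior_Ici] at hx
      exact hfu x (le_of_lt hx) q hq
  have hanti2 : StrictAntiOn (f 0) (Ici 0) := by
    apply strictAntiOn_of_deriv_neg (convex_Ici 0)
    · exact (hf.continuous.comp (continuous_const.prodMk continuous_id)).continuousOn
    · intro x hx
      rw [interior_Ici] at hx
      exact hfv 0 le_rfl x (le_of_lt hx)
  have hflt : ∀ x ∈ Ioo 0 L, f (u x) (v x) < f 0 0 := by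
    intro x hx
    have h1 : f (u x) (v x) < f 0 (v x) :=
      hanti1 (v x) (hvp x hx).le self_mem_Ici (le_of_lt (hup x hx)) (hup x hx)
    have h2 : f 0 (v x) < f 0 0 :=
      hanti2 self_mem_Ici (le_of_lt (hvp x hx)) (hvp x hx)
    linarith
  -- comparison integral
  have hKint : IntervalIntegrable (fun x => (f 0 0 - f (u x) (v x)) * (u x * φ x))
      MeasureTheory.volume 0 L := by
    apply ContinuousOn.intervalIntegrable
    rw [uIcc_of_le hL.le]
    exact (continuousOn_const.sub hfuv).mul (hucont.mul hφcont.continuousOn)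
  have hKpos : 0 < ∫ x in (0:ℝ)..L, (f 0 0 - f (u x) (v x)) * (u x * φ x) := by
    apply intervalIntegral.intervalIntegral_pos_of_pos_on hKint _ hL
    intro x hx
    exact mul_pos (by linarith [hflt x hx]) (mul_pos (hup x hx) (hφpos x hx))
  have hKval : (∫ x in (0:ℝ)..L, (f 0 0 - f (u x) (v x)) * (u x * φ x))
      = f 0 0 * I - J := by
    have h1 : (fun x => (f 0 0 - f (u x) (v x)) * (u x * φ x))
        = fun x => f 0 0 * (u x * φ x) - u x * f (u x) (v x) * φ x := by
      funext x; ring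
    rw [h1, intervalIntegral.integral_sub (hI2.const_mul _) _,
      intervalIntegral.integral_const_mul]
    apply ContinuousOn.intervalIntegrable
    rw [uIcc_of_le hL.le]
    exact (hucont.mul hfuv).mul hφcont.continuousOn
  -- conclude
  have hdl : d * lam < f 0 0 := by
    rw [hKval, hJ] at hKpos
    have hlt : d * lam * I < f 0 0 * I := by rw [mul_assoc]; linarith
    exact lt_of_mul_lt_mul_right hlt hIpos.le
  rw [lt_div_iff₀ (by positivity : (0:ℝ) < π ^ 2)]
  have h5 : d * lam * L ^ 2 = d * π ^ 2 := by
    rw [hlamdef]; field_simp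
  linarith [mul_lt_mul_of_pos_right hdl (pow_pos hL 2), h5]
end
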